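/- Let E be an extensive locally cartesian closed category. If E has W-types, then E has a natural number object. -/

import Mathlib

open CategoryTheory CategoryTheory.Limits

universe v u

variable {E : Type u} [Category.{v} E]

/-- A category with finite limits is locally cartesian closed if every pullback functor
`f* : E/J ⥤ E/I` has a right adjoint (pushforward). -/
def IsLCC (E : Type u) [Category.{v} E] [HasFiniteLimits E] : Prop :=
  ∀ ⦃I J : E⦄ (f : I ⟶ J), (Over.pullback f).IsLeftAdjoint

/-- `E` has W-types if every polynomial endofunctor `f_! ∘ g_* ∘ h* : E/I ⥤ E/I` has an
initial algebra. -/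
def HasWTypes (E : Type u) [Category.{v} E] [HasFiniteLimits E] : Prop :=
  ∀ ⦃I A B : E⦄ (h : A ⟶ I) (g : A ⟶ B) (f : B ⟶ I) (gStar : Over A ⥤ Over B),
    Nonempty (Over.pullback g ⊣ gStar) →
      HasInitial (Endofunctor.Algebra (Over.pullback h ⋙ gStar ⋙ Over.map f))

/-- The coproduct functor `E/A × E/B ⥤ E/(A + B)`. -/
@[simps]
noncomputable def coprodOverFunctor [HasBinaryCoproducts E] (A B : E) :
    Over A × Over B ⥤ Over (A ⨿ B) where
  obj X := Over.mk (coprod.map X.1.hom X.2.hom)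
  map {X Y} f := Over.homMk (coprod.map f.1.left f.2.left)
    (by dsimp; rw [coprod.map_map, Over.w, Over.w])
  map_id X := by ext; dsimp; ext <;> simp
  map_comp f g := by ext; dsimp; ext <;> simp

/-- A category with binary coproducts is extensive if each coproduct functor
`E/A × E/B ⥤ E/(A + B)` is an equivalence of categories. -/
def IsExtensive (E : Type u) [Category.{v} E] [HasBinaryCoproducts E] : Prop :=
  ∀ A B : E, (coprodOverFunctor A B).IsEquivalence

namespace NNOAux

open Endofunctor

section Conj

variable {C : Type*} [Category C] {D : Type*} [Category D]

lemma unitInv_nat (e : C ≌ D) {X Y : C} (f : X ⟶ Y) :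
    e.inverse.map (e.functor.map f) ≫ e.unitInv.app Y = e.unitInv.app X ≫ f := by
  simpa using (e.unitInv.naturality f)

lemma unit_nat (e : C ≌ D) {X Y : C} (f : X ⟶ Y) :
    f ≫ e.unit.app Y = e.unit.app X ≫ e.inverse.map (e.functor.map f) := by
  simpa using (e.unit.naturality f)

lemma counit_nat (e : C ≌ D) {X Y : D} (f : X ⟶ Y) :
    e.functor.map (e.inverse.map f) ≫ e.counit.app Y = e.counit.app X ≫ f := by
  simpa using (e.counit.naturality f)

variable (e : C ≌ D) (F : C ⥤ C)

lemma goal1 {A B : Algebra F} (f : A ⟶ B) :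
    (e.inverse ⋙ F ⋙ e.functor).map (e.functor.map f.f) ≫
      e.functor.map (F.map (e.unitInv.app B.a) ≫ B.str) =
    e.functor.map (F.map (e.unitInv.app A.a) ≫ A.str) ≫ e.functor.map f.f := by
  simp only [Functor.comp_map, ← Functor.map_comp]
  congr 1
  rw [← Functor.map_comp_assoc, unitInv_nat, Functor.map_comp_assoc, Algebra.Hom.h]
  simp

lemma goal2 {A B : Algebra (e.inverse ⋙ F ⋙ e.functor)} (g : A ⟶ B) :
    F.map (e.inverse.map g.f) ≫ (e.unit.app _ ≫ e.inverse.map B.str) =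
    (e.unit.app _ ≫ e.inverse.map A.str) ≫ e.inverse.map g.f := by
  rw [reassoc_of% (unit_nat e (F.map (e.inverse.map g.f))), ← Functor.map_comp]
  have hg := g.h
  simp only [Functor.comp_map] at hg
  rw [hg, Functor.map_comp]
  simp

lemma goal3 (A : Algebra F) :
    F.map (e.unit.app A.a) ≫
      (e.unit.app _ ≫ e.inverse.map (e.functor.map (F.map (e.unitInv.app A.a) ≫ A.str))) =
    A.str ≫ e.unit.app A.a := by
  rw [← unit_nat e (F.map (e.unitInv.app A.a) ≫ A.str), ← Category.assoc,
    show F.map (e.unit.app A.a) ≫ F.map (e.unitInv.app A.a) ≫ A.str = A.str from by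
      rw [← Functor.map_comp_assoc]; simp]

lemma goal4 (Y : Algebra (e.inverse ⋙ F ⋙ e.functor)) :
    (e.inverse ⋙ F ⋙ e.functor).map (e.counit.app Y.a) ≫ Y.str =
    e.functor.map (F.map (e.unitInv.app (e.inverse.obj Y.a)) ≫
        (e.unit.app _ ≫ e.inverse.map Y.str)) ≫ e.counit.app Y.a := by
  simp only [Functor.comp_map, Functor.map_comp, Category.assoc]
  rw [counit_nat e Y.str]
  simp [← Functor.map_comp_assoc, ← Equivalence.unitInv_app_inverse]

/-- Conjugating an endofunctor by an equivalence gives an equivalence of algebra categories. -/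
noncomputable def algebraConj : Algebra F ≌ Algebra (e.inverse ⋙ F ⋙ e.functor) :=
  CategoryTheory.Equivalence.mk
    { obj := fun A => ⟨e.functor.obj A.a, e.functor.map (F.map (e.unitInv.app A.a) ≫ A.str)⟩
      map := fun {A B} f => { f := e.functor.map f.f, h := goal1 e F f } }
    { obj := fun Y => ⟨e.inverse.obj Y.a, e.unit.app _ ≫ e.inverse.map Y.str⟩
      map := fun {A B} g => { f := e.inverse.map g.f, h := goal2 e F g } }
    (NatIso.ofComponents (fun A => Algebra.isoMk (e.unitIso.app A.a) (goal3 e F A))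
      (by intro A B f; ext; exact e.unit.naturality f.f))
    (NatIso.ofComponents (fun Y => Algebra.isoMk (e.counitIso.app Y.a) (goal4 e F Y))
      (by intro A B f; ext; exact counit_nat e f.f))

end Conj

section Main

variable (E : Type u) [Category.{v} E]

/-- The canonical functor `E ⥤ Over (⊤_ E)`. -/
noncomputable def toOverTerminal [HasTerminal E] : E ⥤ Over (⊤_ E) where
  obj X := Over.mk (terminal.from X)
  map {X Y} f := Over.homMk f

/-- The slice over a terminal object is equivalent to the whole category. -/
noncomputable def overTerminalEquiv [HasTerminal E] : Over (⊤_ E) ≌ E :=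
  CategoryTheory.Equivalence.mk (Over.forget _) (toOverTerminal E)
    (NatIso.ofComponents
      (fun X => Over.isoMk (Iso.refl _) (by dsimp [toOverTerminal]; apply Subsingleton.elim))
      (by intro X Y f; ext; simp [toOverTerminal]))
    (NatIso.ofComponents (fun X => Iso.refl _) (by intro X Y f; simp [toOverTerminal]))

@[simp] lemma overTerminalEquiv_functor [HasTerminal E] :
    (overTerminalEquiv E).functor = Over.forget _ := rfl

@[simp] lemma overTerminalEquiv_inverse [HasTerminal E] :
    (overTerminalEquiv E).inverse = toOverTerminal E := rfl

variable [HasFiniteLimits E] [HasFiniteCoproducts E]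

/-- The initial object of `Over (⊤_ E)`. -/
noncomputable def I₀ : Over (⊤_ E) := Over.mk (initial.to _)

noncomputable def isInitialI₀ : IsInitial (I₀ E) :=
  IsInitial.ofUniqueHom (fun Y => Over.homMk (initial.to _)) (fun Y m => by
    ext
    exact initial.hom_ext _ _)

/-- Pairing with the terminal object of `Over (⊤_ E)`. -/
noncomputable def R : Over (⊤_ E) ⥤ Over (⊤_ E) × Over (⊤_ E) :=
  Functor.prod' ((Functor.const _).obj (Over.mk (𝟙 (⊤_ E)))) (𝟭 _)

/-- Pairing with the initial object of `Over (⊤_ E)`. -/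
noncomputable def L : Over (⊤_ E) ⥤ Over (⊤_ E) × Over (⊤_ E) :=
  Functor.prod' ((Functor.const _).obj (I₀ E)) (𝟭 _)

/-- The second projection is left adjoint to pairing with the terminal object. -/
noncomputable def adjSnd : CategoryTheory.Prod.snd (Over (⊤_ E)) (Over (⊤_ E)) ⊣ R E :=
  Adjunction.mkOfHomEquiv
    { homEquiv := fun X Y =>
        { toFun := fun g => (Over.mkIdTerminal.from X.1, g)
          invFun := fun f => f.2
          left_inv := fun g => rfl
          right_inv := fun f => Prod.ext (Over.mkIdTerminal.hom_ext _ _) rfl }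
      homEquiv_naturality_left_symm := fun f g => rfl
      homEquiv_naturality_right := fun f g =>
        Prod.ext (Over.mkIdTerminal.hom_ext _ _) rfl }

/-- Pairing with the initial object is left adjoint to the second projection. -/
noncomputable def adjL : L E ⊣ CategoryTheory.Prod.snd (Over (⊤_ E)) (Over (⊤_ E)) :=
  Adjunction.mkOfHomEquiv
    { homEquiv := fun Y X =>
        { toFun := fun f => f.2
          invFun := fun g => ((isInitialI₀ E).to X.1, g)
          left_inv := fun f => Prod.ext ((isInitialI₀ E).hom_ext _ _) rfl
          right_inv := fun g => rfl }
      homEquiv_naturality_left_symm := fun f g =>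
        Prod.ext ((isInitialI₀ E).hom_ext _ _) rfl
      homEquiv_naturality_right := fun f g => rfl }

variable {E}

/-- `⊥ ⨿ X ≅ X`. -/
noncomputable def zeroCoprodIso (X : E) : (⊥_ E) ⨿ X ≅ X where
  hom := coprod.desc (initial.to X) (𝟙 X)
  inv := coprod.inr
  hom_inv_id := coprod.hom_ext (initial.hom_ext _ _) (by rw [coprod.inr_desc_assoc, Category.id_comp, Category.comp_id])
  inv_hom_id := by rw [coprod.inr_desc]

variable (E)

/-- Composing pairing-with-initial with the coproduct functor gives `Over.map inr`. -/
noncomputable def alphaIso :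
    L E ⋙ coprodOverFunctor (⊤_ E) (⊤_ E) ≅ Over.map (coprod.inr : ⊤_ E ⟶ _) :=
  NatIso.ofComponents
    (fun Y => Over.isoMk (zeroCoprodIso Y.left)
      (coprod.hom_ext (initial.hom_ext _ _) (by
        simp [zeroCoprodIso, I₀, L]
        erw [coprod.inr_desc_assoc, Category.id_comp, coprod.inr_map])))
    (by
      intro Y Z u
      ext
      exact coprod.hom_ext (initial.hom_ext _ _) (by
        change coprod.inr ≫ coprod.map (𝟙 (⊥_ E)) u.left ≫ coprod.desc (initial.to Z.left) (𝟙 _) =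
          coprod.inr ≫ coprod.desc (initial.to Y.left) (𝟙 _) ≫ u.left
        rw [coprod.inr_map_assoc, coprod.inr_desc, coprod.inr_desc_assoc, Category.comp_id,
          Category.id_comp]))

variable [inst : (coprodOverFunctor (⊤_ E) (⊤_ E)).IsEquivalence]

/-- The pushforward along `coprod.inr : ⊤ ⟶ ⊤ ⨿ ⊤`. -/
noncomputable def gStarF : Over (⊤_ E) ⥤ Over ((⊤_ E) ⨿ (⊤_ E)) :=
  R E ⋙ (coprodOverFunctor (⊤_ E) (⊤_ E)).asEquivalence.functor

/-- The conjugate of the polynomial functor is the NNO polynomial `X ↦ ⊤ ⨿ X`. -/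
noncomputable def iso2 :
    (overTerminalEquiv E).inverse ⋙
      (gStarF E ⋙ Over.map (terminal.from ((⊤_ E) ⨿ (⊤_ E)))) ⋙ (overTerminalEquiv E).functor ≅
    coprod.functor.obj (⊤_ E) :=
  NatIso.ofComponents (fun X => Iso.refl _) (by
    intro X Y u
    simp [gStarF, R, toOverTerminal, Functor.asEquivalence]
    erw [Category.comp_id, Category.id_comp, Over.map_map_left]
    rfl)

/-- `Over.pullback inr ⊣ gStarF`. -/
noncomputable def adjFinal :
    Over.pullback (coprod.inr : ⊤_ E ⟶ _) ⊣ gStarF E := by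
  have e₂ := (coprodOverFunctor (⊤_ E) (⊤_ E)).asEquivalence
  have adj2 : Over.map (coprod.inr : ⊤_ E ⟶ _) ⊣
      (coprodOverFunctor (⊤_ E) (⊤_ E)).asEquivalence.inverse ⋙
        CategoryTheory.Prod.snd (Over (⊤_ E)) (Over (⊤_ E)) :=
    ((adjL E).comp (coprodOverFunctor (⊤_ E) (⊤_ E)).asEquivalence.toAdjunction).ofNatIsoLeft
      (alphaIso E)
  have β : Over.pullback (coprod.inr : ⊤_ E ⟶ _) ≅
      (coprodOverFunctor (⊤_ E) (⊤_ E)).asEquivalence.inverse ⋙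
        CategoryTheory.Prod.snd (Over (⊤_ E)) (Over (⊤_ E)) :=
    (Over.mapPullbackAdj _).rightAdjointUniq adj2
  exact (((coprodOverFunctor (⊤_ E) (⊤_ E)).asEquivalence.symm.toAdjunction).comp
    (adjSnd E)).ofNatIsoLeft β.symm

end Main

end NNOAux

open NNOAux Endofunctor in
/-- an extensive locally cartesian closed category with W-types has a natural
number object, i.e. an initial algebra for the endofunctor `X ↦ 1 ⨿ X`. -/
theorem nno_of_wTypes [HasFiniteLimits E] [HasFiniteCoproducts E] (hext : IsExtensive E)
    (hlcc : IsLCC E) (hW : HasWTypes E) :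
    HasInitial (Endofunctor.Algebra (coprod.functor.obj (⊤_ E))) := by
  letI : (coprodOverFunctor (⊤_ E) (⊤_ E)).IsEquivalence := hext _ _
  haveI hIA := hW (𝟙 (⊤_ E)) (coprod.inr : ⊤_ E ⟶ _)
    (terminal.from ((⊤_ E) ⨿ (⊤_ E))) (gStarF E) ⟨adjFinal E⟩
  set W := Over.pullback (𝟙 (⊤_ E)) ⋙ gStarF E ⋙
    Over.map (terminal.from ((⊤_ E) ⨿ (⊤_ E))) with hWdef
  set t := overTerminalEquiv E with ht
  have iso1 : W ≅ gStarF E ⋙ Over.map (terminal.from ((⊤_ E) ⨿ (⊤_ E))) :=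
    Functor.isoWhiskerRight Over.pullbackId _ ≪≫ Functor.leftUnitor _
  have isoTotal : t.inverse ⋙ W ⋙ t.functor ≅ coprod.functor.obj (⊤_ E) :=
    Functor.isoWhiskerLeft t.inverse (Functor.isoWhiskerRight iso1 t.functor) ≪≫ iso2 E
  have eqTotal : Algebra W ≌ Algebra (coprod.functor.obj (⊤_ E)) :=
    (algebraConj t W).trans (Algebra.equivOfNatIso isoTotal)
  exact Adjunction.hasColimitsOfShape_of_equivalence eqTotal.inverse
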